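/- A positive braid word in B_3 is left-divisible (equivalently, right-divisible) by Δ = σ₁σ₂σ₁ in the positive braid monoid B_3⁺ if and only if it is equal in B_3⁺ to a positive word containing the factor σ₁σ₂σ₁ or the factor σ₂σ₁σ₂. -/

import Mathlib

open FreeMonoid in
/-- The defining relation of the positive braid monoid `B₃⁺`. -/
def braidMonRel : FreeMonoid (Fin 2) → FreeMonoid (Fin 2) → Prop := fun x y =>
  x = of 0 * of 1 * of 0 ∧ y = of 1 * of 0 * of 1

/-- The positive braid monoid `B₃⁺ = ⟨σ₁, σ₂ ∣ σ₁σ₂σ₁ = σ₂σ₁σ₂⟩⁺`. -/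
abbrev B3Pos : Type := (conGen braidMonRel).Quotient

/-- The canonical projection from positive braid words to `B₃⁺`. -/
def posMk : FreeMonoid (Fin 2) →* B3Pos := (conGen braidMonRel).mk'

/-- The Garside element `Δ = σ₁σ₂σ₁` of `B₃⁺`. -/
def ΔPos : B3Pos := posMk (FreeMonoid.of 0 * FreeMonoid.of 1 * FreeMonoid.of 0)

open FreeMonoid

/-- The flip endomorphism swapping the two generators. -/
def τ : FreeMonoid (Fin 2) →* FreeMonoid (Fin 2) := FreeMonoid.map (fun i => 1 - i)

lemma rel101 : posMk (of 1 * of 0 * of 1) = ΔPos := by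
  symm
  exact (Con.eq _).mpr (ConGen.Rel.of _ _ ⟨rfl, rfl⟩)

lemma gen_swap (a : Fin 2) : posMk (of a) * ΔPos = ΔPos * posMk (of (1 - a)) := by
  fin_cases a
  · calc posMk (of 0) * ΔPos = posMk (of 0) * posMk (of 1 * of 0 * of 1) := by rw [rel101]
      _ = posMk (of 0 * (of 1 * of 0 * of 1)) := by rw [← map_mul]
      _ = posMk ((of 0 * of 1 * of 0) * of 1) := by simp [mul_assoc]
      _ = ΔPos * posMk (of 1) := by rw [map_mul]; rfl
      _ = ΔPos * posMk (of (1 - 0)) := rfl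
  · calc posMk (of 1) * ΔPos = posMk (of 1) * posMk (of 0 * of 1 * of 0) := rfl
      _ = posMk (of 1 * (of 0 * of 1 * of 0)) := by rw [← map_mul]
      _ = posMk ((of 1 * of 0 * of 1) * of 0) := by simp [mul_assoc]
      _ = ΔPos * posMk (of 0) := by rw [map_mul, rel101]
      _ = ΔPos * posMk (of (1 - 1)) := rfl

/-- The Garside flip identity: `x·Δ = Δ·τ(x)` in `B₃⁺`. -/
lemma swap_comm (x : FreeMonoid (Fin 2)) : posMk x * ΔPos = ΔPos * posMk (τ x) := by
  induction x using FreeMonoid.recOn with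
  | one => simp
  | of_mul a xs ih =>
      rw [map_mul, mul_assoc, ih, ← mul_assoc, gen_swap, mul_assoc]
      simp [τ, mul_assoc]

lemma τ_τ (x : FreeMonoid (Fin 2)) : τ (τ x) = x := by
  have : τ.comp τ = MonoidHom.id _ := FreeMonoid.hom_eq (fun a => by fin_cases a <;> rfl)
  calc τ (τ x) = τ.comp τ x := rfl
    _ = x := by rw [this]; rfl

lemma swap_comm' (x : FreeMonoid (Fin 2)) : ΔPos * posMk x = posMk (τ x) * ΔPos := by
  rw [swap_comm, τ_τ]

lemma Δ_eq : posMk (of 0 * of 1 * of 0) = ΔPos := rfl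

open FreeMonoid in
/-- A positive braid word is left-divisible (equivalently, right-divisible) by
`Δ = σ₁σ₂σ₁` in `B₃⁺` iff it is equal in `B₃⁺` to a positive word containing the
factor `σ₁σ₂σ₁` or the factor `σ₂σ₁σ₂`. -/
theorem delta_divides_iff_factor (w : FreeMonoid (Fin 2)) :
    ((∃ u : FreeMonoid (Fin 2), posMk w = ΔPos * posMk u) ↔
      (∃ u v : FreeMonoid (Fin 2),
        posMk w = posMk (u * (of 0 * of 1 * of 0) * v) ∨
        posMk w = posMk (u * (of 1 * of 0 * of 1) * v))) ∧
    ((∃ u : FreeMonoid (Fin 2), posMk w = posMk u * ΔPos) ↔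
      (∃ u v : FreeMonoid (Fin 2),
        posMk w = posMk (u * (of 0 * of 1 * of 0) * v) ∨
        posMk w = posMk (u * (of 1 * of 0 * of 1) * v))) := by
  constructor
  · constructor
    · rintro ⟨u, hu⟩
      exact ⟨1, u, Or.inl (by rw [hu, one_mul, map_mul, Δ_eq])⟩
    · rintro ⟨u, v, h | h⟩
      · exact ⟨τ u * v, by
          rw [h, map_mul, map_mul, Δ_eq, swap_comm, mul_assoc, ← map_mul]⟩
      · exact ⟨τ u * v, by
          rw [h, map_mul, map_mul, rel101, swap_comm, mul_assoc, ← map_mul]⟩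
  · constructor
    · rintro ⟨u, hu⟩
      exact ⟨u, 1, Or.inl (by rw [hu, mul_one, map_mul, Δ_eq])⟩
    · rintro ⟨u, v, h | h⟩
      · exact ⟨u * τ v, by
          rw [h, map_mul, map_mul, Δ_eq, mul_assoc, swap_comm', ← mul_assoc, ← map_mul]⟩
      · exact ⟨u * τ v, by
          rw [h, map_mul, map_mul, rel101, mul_assoc, swap_comm', ← mul_assoc, ← map_mul]⟩
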